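/- For n ≥ 1, the number of Kreweras intervals of size n equals (1/(2n+1)) · C(3n, n), i.e., the number of intervals in the lattice of non-crossing partitions of [n] ordered by refinement equals (1/(2n+1)) · C(3n, n). -/

import Mathlib

/-- A partition of Fin n (as a setoid) is non-crossing if there are no a < b < c < d with
a, c in one block and b, d in a different block. -/
def Noncrossing {n : ℕ} (π : Setoid (Fin n)) : Prop :=
  ∀ a b c d : Fin n, a < b → b < c → c < d → π a c → π b d → π a b

/-- Generalized ballot / Fuss-Catalan numbers. -/
def KB : ℕ → ℕ → ℕ
  | 0, _ => 1
  | _+1, 0 => 0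
  | n+1, p+1 => KB (n+1) p + KB n (p+3)

lemma KB_zero (p : ℕ) : KB 0 p = 1 := by cases p <;> simp [KB]

lemma KB_succ_succ (n p : ℕ) : KB (n+1) (p+1) = KB (n+1) p + KB n (p+3) := by
  rw [KB]

lemma KB_closed : ∀ n p, (3*n+p) * KB n p = p * Nat.choose (3*n+p) n := by
  intro n
  induction n with
  | zero => intro p; simp [KB_zero]
  | succ n ih =>
    intro p
    induction p with
    | zero => simp [KB]
    | succ p ihp =>
      have hM : 3*(n+1)+(p+1) = (3*n+p+3)+1 := by omega
      rw [hM]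
      have e1 : (3*n+p+3) * KB (n+1) p = p * Nat.choose (3*n+p+3) (n+1) := by
        have h : 3*(n+1)+p = 3*n+p+3 := by omega
        rw [h] at ihp; exact ihp
      have e2 : (3*n+p+3) * KB n (p+3) = (p+3) * Nat.choose (3*n+p+3) n := by
        have := ih (p+3)
        have h : 3*n+(p+3) = 3*n+p+3 := by omega
        rw [h] at this; exact this
      have e3 : (n+1) * Nat.choose (3*n+p+3) (n+1) = (2*n+p+3) * Nat.choose (3*n+p+3) n := by
        have := Nat.choose_succ_right_eq (3*n+p+3) n
        have h : 3*n+p+3 - n = 2*n+p+3 := by omega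
        rw [h] at this; linarith [this]
      have e4 : Nat.choose (3*n+p+3+1) (n+1) = Nat.choose (3*n+p+3) n + Nat.choose (3*n+p+3) (n+1) :=
        Nat.choose_succ_succ (3*n+p+3) n
      show (3*n+p+3+1) * KB (n+1) (p+1) = (p+1) * Nat.choose (3*n+p+3+1) (n+1)
      have hKB := KB_succ_succ n p
      apply Nat.eq_of_mul_eq_mul_left (show 0 < (3*n+p+3)*(n+1) by positivity)
      rw [hKB, e4]
      zify at e1 e2 e3 ⊢
      linear_combination ((3*(n:ℤ)+p+4)*(n+1))*e1 + ((3*(n:ℤ)+p+4)*(n+1))*e2 - (3*(n:ℤ)+3)*e3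

lemma KB_conv : ∀ n p r, (∑ i ∈ Finset.range (n+1), KB i p * KB (n-i) r) = KB n (p+r) := by
  intro n
  induction n using Nat.strong_induction_on with
  | _ n IH =>
    intro p
    induction p with
    | zero =>
      intro r
      rw [Finset.sum_eq_single 0]
      · simp [KB_zero]
      · intro i hi hne
        match i, hne with
        | j+1, _ => simp [KB]
      · simp
    | succ p ihp =>
      intro r
      match n with
      | 0 => simp [KB_zero]
      | m+1 =>
        have expand : ∀ i, KB (i+1) (p+1) * KB (m+1-(i+1)) r
            = KB (i+1) p * KB (m-i) r + KB i (p+3) * KB (m-i) r := by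
          intro i
          have : m+1-(i+1) = m-i := by omega
          rw [this, KB_succ_succ, add_mul]
        rw [Finset.sum_range_succ' (fun i => KB i (p+1) * KB (m+1-i) r) (m+1)]
        simp only [expand]
        rw [Finset.sum_add_distrib]
        have h1 : (∑ i ∈ Finset.range (m+1), KB (i+1) p * KB (m-i) r) + KB 0 (p+1) * KB (m+1-0) r
            = ∑ i ∈ Finset.range (m+2), KB i p * KB (m+1-i) r := by
          rw [Finset.sum_range_succ' (fun i => KB i p * KB (m+1-i) r) (m+1)]
          simp only [KB_zero]
          congr 1
          apply Finset.sum_congr rfl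
          intro i _
          congr 2
          omega
        have h2 : (∑ i ∈ Finset.range (m+1), KB i (p+3) * KB (m-i) r) = KB m (p+3+r) :=
          IH m (by omega) (p+3) r
        have h3 : (∑ i ∈ Finset.range (m+2), KB i p * KB (m+1-i) r) = KB (m+1) (p+r) := ihp r
        have hfin : KB (m+1) (p+1+r) = KB (m+1) (p+r) + KB m (p+3+r) := by
          rw [show p+1+r = (p+r)+1 by ring, KB_succ_succ, show p+r+3 = p+3+r by ring]
        rw [hfin]
        linarith [h1, h2, h3]

lemma KB_final (n : ℕ) : (2*n+1) * KB n 1 = Nat.choose (3*n) n := by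
  have h1 : (3*n+1) * KB n 1 = Nat.choose (3*n+1) n := by
    have := KB_closed n 1; simpa using this
  have h2 : (3*n+1) * Nat.choose (3*n) n = (2*n+1) * Nat.choose (3*n+1) n := by
    have a1 := Nat.add_one_mul_choose_eq (3*n) n
    have a2 := Nat.choose_succ_right_eq (3*n+1) n
    have h : 3*n+1 - n = 2*n+1 := by omega
    rw [h] at a2
    rw [show 3*n+1 = 3*n+1 from rfl] at a1
    calc (3*n+1) * Nat.choose (3*n) n = Nat.choose (3*n+1) (n+1) * (n+1) := a1
      _ = Nat.choose (3*n+1) n * (2*n+1) := a2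
      _ = (2*n+1) * Nat.choose (3*n+1) n := by ring
  apply Nat.eq_of_mul_eq_mul_left (show 0 < 3*n+1 by omega)
  calc (3*n+1) * ((2*n+1) * KB n 1) = (2*n+1) * ((3*n+1) * KB n 1) := by ring
    _ = (2*n+1) * Nat.choose (3*n+1) n := by rw [h1]
    _ = (3*n+1) * Nat.choose (3*n) n := h2.symm


lemma KB_succ_zero (n : ℕ) : KB (n+1) 0 = 0 := by simp [KB]

section srep
variable {m : ℕ}
open Classical in
noncomputable def classFinset (σ : Setoid (Fin m)) (x : Fin m) : Finset (Fin m) :=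
  Finset.univ.filter (fun y => σ x y)
lemma mem_classFinset (σ : Setoid (Fin m)) (x y : Fin m) :
    y ∈ classFinset σ x ↔ σ x y := by simp [classFinset]
lemma classFinset_nonempty (σ : Setoid (Fin m)) (x : Fin m) : (classFinset σ x).Nonempty :=
  ⟨x, (mem_classFinset σ x x).mpr (σ.refl x)⟩
noncomputable def srep (σ : Setoid (Fin m)) (x : Fin m) : Fin m :=
  (classFinset σ x).min' (classFinset_nonempty σ x)
lemma srep_rel (σ : Setoid (Fin m)) (x : Fin m) : σ x (srep σ x) :=
  (mem_classFinset σ x _).mp (Finset.min'_mem _ _)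
lemma srep_le (σ : Setoid (Fin m)) {x y : Fin m} (h : σ x y) : srep σ x ≤ y :=
  Finset.min'_le _ _ ((mem_classFinset σ x y).mpr h)
lemma srep_eq_of_rel (σ : Setoid (Fin m)) {x y : Fin m} (h : σ x y) : srep σ x = srep σ y :=
  le_antisymm (srep_le σ (σ.trans h (srep_rel σ y)))
    (srep_le σ (σ.trans (σ.symm h) (srep_rel σ x)))
lemma rel_iff_srep (σ : Setoid (Fin m)) (x y : Fin m) : σ x y ↔ srep σ x = srep σ y := by
  constructor
  · exact srep_eq_of_rel σ
  · intro h
    have hx := srep_rel σ x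
    have hy := srep_rel σ y
    rw [h] at hx
    exact σ.trans hx (σ.symm hy)
lemma srep_eq_iff (σ : Setoid (Fin m)) (x v : Fin m) :
    srep σ x = v ↔ σ x v ∧ ∀ y, σ x y → v ≤ y := by
  constructor
  · rintro rfl
    exact ⟨srep_rel σ x, fun y hy => srep_le σ hy⟩
  · rintro ⟨h1, h2⟩
    exact le_antisymm (srep_le σ h1) (h2 _ (srep_rel σ x))
end srep

section glue

variable (n j k : ℕ) (tb tc : Bool)

open Classical in
/-- generic label function gluing three setoids, with top-class merge flags -/
noncomputable def Fgen (α : Setoid (Fin j)) (β : Setoid (Fin (k-j))) (γ : Setoid (Fin (n-k)))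
    (x : Fin (n+1)) : ℕ :=
  if hx : x.val < j then (srep α ⟨x.val, hx⟩).val
  else if hx2 : x.val < k then
    (if tb = true ∧ β ⟨x.val - j, by omega⟩ ⟨0, by omega⟩ then n+1
     else j + (srep β ⟨x.val - j, by omega⟩).val)
  else if hx3 : x.val < n then
    (if tc = true ∧ γ ⟨x.val - k, by omega⟩ ⟨0, by omega⟩ then n+1
     else k + (srep γ ⟨x.val - k, by omega⟩).val)
  else n+1

def genTop (β : Setoid (Fin (k-j))) (γ : Setoid (Fin (n-k))) (x : Fin (n+1)) : Prop :=
  x.val = n ∨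
  (∃ (h1 : j ≤ x.val) (h2 : x.val < k), tb = true ∧ β ⟨x.val - j, by omega⟩ ⟨0, by omega⟩) ∨
  (∃ (h1 : k ≤ x.val) (h2 : x.val < n), tc = true ∧ γ ⟨x.val - k, by omega⟩ ⟨0, by omega⟩)

def gluedGen (α : Setoid (Fin j)) (β : Setoid (Fin (k-j))) (γ : Setoid (Fin (n-k)))
    (x y : Fin (n+1)) : Prop :=
  (∃ (hx : x.val < j) (hy : y.val < j), α ⟨x.val, hx⟩ ⟨y.val, hy⟩) ∨
  (∃ (_ : j ≤ x.val) (hx2 : x.val < k) (_ : j ≤ y.val) (hy2 : y.val < k),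
      β ⟨x.val - j, by omega⟩ ⟨y.val - j, by omega⟩) ∨
  (∃ (hx1 : k ≤ x.val) (hx2 : x.val < n) (hy1 : k ≤ y.val) (hy2 : y.val < n),
      γ ⟨x.val - k, by omega⟩ ⟨y.val - k, by omega⟩) ∨
  (genTop n j k tb tc β γ x ∧ genTop n j k tb tc β γ y)

variable {n j k tb tc}
variable {α : Setoid (Fin j)} {β : Setoid (Fin (k-j))} {γ : Setoid (Fin (n-k))}

lemma Fgen_alpha {x : Fin (n+1)} (hx : x.val < j) :
    Fgen n j k tb tc α β γ x = (srep α ⟨x.val, hx⟩).val := by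
  rw [Fgen, dif_pos hx]

open Classical in
lemma Fgen_beta {x : Fin (n+1)} (h1 : ¬ x.val < j) (h2 : x.val < k) :
    Fgen n j k tb tc α β γ x =
      (if tb = true ∧ β ⟨x.val - j, by omega⟩ ⟨0, by omega⟩ then n+1
       else j + (srep β ⟨x.val - j, by omega⟩).val) := by
  rw [Fgen, dif_neg h1, dif_pos h2]

open Classical in
lemma Fgen_gamma (hjk : j ≤ k) {x : Fin (n+1)} (h2 : ¬ x.val < k) (h3 : x.val < n) :
    Fgen n j k tb tc α β γ x =
      (if tc = true ∧ γ ⟨x.val - k, by omega⟩ ⟨0, by omega⟩ then n+1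
       else k + (srep γ ⟨x.val - k, by omega⟩).val) := by
  rw [Fgen, dif_neg (by omega), dif_neg h2, dif_pos h3]

lemma Fgen_last (hjk : j ≤ k) (hkn : k ≤ n) {x : Fin (n+1)} (h3 : ¬ x.val < n) :
    Fgen n j k tb tc α β γ x = n+1 := by
  rw [Fgen, dif_neg (by omega), dif_neg (by omega), dif_neg h3]

lemma Fgen_top (hjk : j ≤ k) (hkn : k ≤ n) {x : Fin (n+1)}
    (ht : genTop n j k tb tc β γ x) : Fgen n j k tb tc α β γ x = n+1 := by
  rcases ht with h | ⟨h1, h2, h3⟩ | ⟨h1, h2, h3⟩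
  · exact Fgen_last hjk hkn (by omega)
  · rw [Fgen_beta (by omega) h2, if_pos h3]
  · rw [Fgen_gamma hjk (by omega) h2, if_pos h3]

open Classical in
lemma Fgen_spec (hjk : j ≤ k) (hkn : k ≤ n) (x : Fin (n+1)) :
    (∃ (hx : x.val < j), Fgen n j k tb tc α β γ x = (srep α ⟨x.val, hx⟩).val
        ∧ Fgen n j k tb tc α β γ x < j) ∨
    (∃ (h1 : j ≤ x.val) (h2 : x.val < k),
        ¬ (tb = true ∧ β ⟨x.val - j, by omega⟩ ⟨0, by omega⟩)
        ∧ Fgen n j k tb tc α β γ x = j + (srep β ⟨x.val - j, by omega⟩).val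
        ∧ j ≤ Fgen n j k tb tc α β γ x ∧ Fgen n j k tb tc α β γ x < k) ∨
    (∃ (h1 : k ≤ x.val) (h2 : x.val < n),
        ¬ (tc = true ∧ γ ⟨x.val - k, by omega⟩ ⟨0, by omega⟩)
        ∧ Fgen n j k tb tc α β γ x = k + (srep γ ⟨x.val - k, by omega⟩).val
        ∧ k ≤ Fgen n j k tb tc α β γ x ∧ Fgen n j k tb tc α β γ x < n) ∨
    (genTop n j k tb tc β γ x ∧ Fgen n j k tb tc α β γ x = n+1) := by
  rcases Nat.lt_or_ge x.val j with hxj | hxj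
  · refine Or.inl ⟨hxj, Fgen_alpha hxj, ?_⟩
    rw [Fgen_alpha hxj]
    exact (srep α ⟨x.val, hxj⟩).isLt
  rcases Nat.lt_or_ge x.val k with hxk | hxk
  · by_cases ht : tb = true ∧ β ⟨x.val - j, by omega⟩ ⟨0, by omega⟩
    · exact Or.inr (Or.inr (Or.inr ⟨Or.inr (Or.inl ⟨hxj, hxk, ht⟩),
        by rw [Fgen_beta (by omega) hxk, if_pos ht]⟩))
    · refine Or.inr (Or.inl ⟨hxj, hxk, ht, ?_, ?_, ?_⟩) <;>
        rw [Fgen_beta (by omega) hxk, if_neg ht]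
      · omega
      · have := (srep β ⟨x.val - j, by omega⟩).isLt
        omega
  rcases Nat.lt_or_ge x.val n with hxn | hxn
  · by_cases ht : tc = true ∧ γ ⟨x.val - k, by omega⟩ ⟨0, by omega⟩
    · exact Or.inr (Or.inr (Or.inr ⟨Or.inr (Or.inr ⟨hxk, hxn, ht⟩),
        by rw [Fgen_gamma hjk (by omega) hxn, if_pos ht]⟩))
    · refine Or.inr (Or.inr (Or.inl ⟨hxk, hxn, ht, ?_, ?_, ?_⟩)) <;>
        rw [Fgen_gamma hjk (by omega) hxn, if_neg ht]
      · omega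
      · have := (srep γ ⟨x.val - k, by omega⟩).isLt
        omega
  · exact Or.inr (Or.inr (Or.inr ⟨Or.inl (by omega), Fgen_last hjk hkn (by omega)⟩))

open Classical in
lemma gluedGen_iff (hjk : j ≤ k) (hkn : k ≤ n) (x y : Fin (n+1)) :
    gluedGen n j k tb tc α β γ x y ↔
      Fgen n j k tb tc α β γ x = Fgen n j k tb tc α β γ y := by
  constructor
  · rintro (⟨hx, hy, hα⟩ | ⟨hx1, hx2, hy1, hy2, hβ⟩ | ⟨hx1, hx2, hy1, hy2, hγ⟩ | ⟨htx, hty⟩)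
    · rw [Fgen_alpha hx, Fgen_alpha hy, srep_eq_of_rel α hα]
    · by_cases ht : tb = true ∧ β ⟨x.val - j, by omega⟩ ⟨0, by omega⟩
      · have ht' : tb = true ∧ β ⟨y.val - j, by omega⟩ ⟨0, by omega⟩ :=
          ⟨ht.1, β.trans (β.symm hβ) ht.2⟩
        rw [Fgen_beta (by omega) hx2, if_pos ht, Fgen_beta (by omega) hy2, if_pos ht']
      · have ht' : ¬ (tb = true ∧ β ⟨y.val - j, by omega⟩ ⟨0, by omega⟩) := by
          intro hc
          exact ht ⟨hc.1, β.trans hβ hc.2⟩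
        rw [Fgen_beta (by omega) hx2, if_neg ht, Fgen_beta (by omega) hy2, if_neg ht',
          srep_eq_of_rel β hβ]
    · by_cases ht : tc = true ∧ γ ⟨x.val - k, by omega⟩ ⟨0, by omega⟩
      · have ht' : tc = true ∧ γ ⟨y.val - k, by omega⟩ ⟨0, by omega⟩ :=
          ⟨ht.1, γ.trans (γ.symm hγ) ht.2⟩
        rw [Fgen_gamma hjk (by omega) hx2, if_pos ht, Fgen_gamma hjk (by omega) hy2, if_pos ht']
      · have ht' : ¬ (tc = true ∧ γ ⟨y.val - k, by omega⟩ ⟨0, by omega⟩) := by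
          intro hc
          exact ht ⟨hc.1, γ.trans hγ hc.2⟩
        rw [Fgen_gamma hjk (by omega) hx2, if_neg ht, Fgen_gamma hjk (by omega) hy2, if_neg ht',
          srep_eq_of_rel γ hγ]
    · rw [Fgen_top hjk hkn htx, Fgen_top hjk hkn hty]
  · intro h
    rcases Fgen_spec (tb := tb) (tc := tc) (α := α) (β := β) (γ := γ) hjk hkn x with ⟨hx, ex, rx⟩ | ⟨hx1, hx2, ntx, ex, rx1, rx2⟩ |
        ⟨hx1, hx2, ntx, ex, rx1, rx2⟩ | ⟨htx, ex⟩ <;>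
      rcases Fgen_spec (tb := tb) (tc := tc) (α := α) (β := β) (γ := γ) hjk hkn y with ⟨hy, ey, ry⟩ | ⟨hy1, hy2, nty, ey, ry1, ry2⟩ |
          ⟨hy1, hy2, nty, ey, ry1, ry2⟩ | ⟨hty, ey⟩
    · refine Or.inl ⟨hx, hy, ?_⟩
      rw [rel_iff_srep]
      apply Fin.ext
      omega
    · omega
    · omega
    · omega
    · omega
    · refine Or.inr (Or.inl ⟨hx1, hx2, hy1, hy2, ?_⟩)
      rw [rel_iff_srep]
      apply Fin.ext
      omega
    · omega
    · omega
    · omega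
    · omega
    · refine Or.inr (Or.inr (Or.inl ⟨hx1, hx2, hy1, hy2, ?_⟩))
      rw [rel_iff_srep]
      apply Fin.ext
      omega
    · omega
    · omega
    · omega
    · omega
    · exact Or.inr (Or.inr (Or.inr ⟨htx, hty⟩))

lemma fin_mk_lt {m u v : ℕ} {hu : u < m} {hv : v < m} (h : u < v) :
    (⟨u, hu⟩ : Fin m) < ⟨v, hv⟩ := Fin.mk_lt_mk.mpr h

theorem NC_gluedGen (hjk : j ≤ k) (hkn : k ≤ n)
    (hα : Noncrossing α) (hβ : Noncrossing β) (hγ : Noncrossing γ) :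
    ∀ a b c d : Fin (n+1), a < b → b < c → c < d →
      gluedGen n j k tb tc α β γ a c → gluedGen n j k tb tc α β γ b d →
      gluedGen n j k tb tc α β γ a b := by
  intro a b c d hab hbc hcd hac hbd
  have hab' : a.val < b.val := hab
  have hbc' : b.val < c.val := hbc
  have hcd' : c.val < d.val := hcd
  have hdn : d.val ≤ n := by omega
  rcases hac with ⟨ha, hc, hr1⟩ | ⟨ha1, ha2, hc1, hc2, hr1⟩ | ⟨ha1, ha2, hc1, hc2, hr1⟩ |
      ⟨hta, htc⟩
  · -- a,c in region 1
    rcases hbd with ⟨hb, hd, hr2⟩ | ⟨hb1, _, _, _, _⟩ | ⟨hb1, _, _, _, _⟩ | ⟨htb, _⟩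
    · exact Or.inl ⟨ha, hb, hα _ _ _ _ (fin_mk_lt hab') (fin_mk_lt hbc') (fin_mk_lt hcd') hr1 hr2⟩
    · omega
    · omega
    · rcases htb with h | ⟨h1, _, _⟩ | ⟨h1, _, _⟩ <;> omega
  · -- a,c in region 2
    rcases hbd with ⟨hb, _, _⟩ | ⟨hb1, hb2, hd1, hd2, hr2⟩ | ⟨hb1, _, _, _, _⟩ | ⟨htb, htd⟩
    · omega
    · exact Or.inr (Or.inl ⟨ha1, ha2, hb1, hb2,
        hβ _ _ _ _ (fin_mk_lt (by omega)) (fin_mk_lt (by omega)) (fin_mk_lt (by omega)) hr1 hr2⟩)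
    · omega
    · rcases htb with h | ⟨hb1, hb2, htb1, hr0⟩ | ⟨hb1, _, _⟩
      · omega
      · -- b in class of top via β; crossing argument
        have hga : genTop n j k tb tc β γ a := by
          by_cases haj : a.val = j
          · refine Or.inr (Or.inl ⟨ha1, ha2, htb1, ?_⟩)
            have e : (⟨a.val - j, by omega⟩ : Fin (k-j)) = ⟨0, by omega⟩ := by simp only [Fin.mk.injEq]; omega
            rw [e]
          · refine Or.inr (Or.inl ⟨ha1, ha2, htb1, β.symm ?_⟩)
            exact hβ ⟨0, by omega⟩ ⟨a.val - j, by omega⟩ ⟨b.val - j, by omega⟩ ⟨c.val - j, by omega⟩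
              (fin_mk_lt (by omega)) (fin_mk_lt (by omega)) (fin_mk_lt (by omega))
              (β.symm hr0) hr1
        exact Or.inr (Or.inr (Or.inr ⟨hga, Or.inr (Or.inl ⟨hb1, hb2, htb1, hr0⟩)⟩))
      · omega
  · -- a,c in region 3
    rcases hbd with ⟨hb, _, _⟩ | ⟨hb1, hb2, _, _, _⟩ | ⟨hb1, hb2, hd1, hd2, hr2⟩ | ⟨htb, htd⟩
    · omega
    · omega
    · exact Or.inr (Or.inr (Or.inl ⟨ha1, ha2, hb1, hb2,
        hγ _ _ _ _ (fin_mk_lt (by omega)) (fin_mk_lt (by omega)) (fin_mk_lt (by omega)) hr1 hr2⟩))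
    · rcases htb with h | ⟨hb1, _, _⟩ | ⟨hb1, hb2, htc1, hr0⟩
      · omega
      · omega
      · have hga : genTop n j k tb tc β γ a := by
          by_cases hak : a.val = k
          · refine Or.inr (Or.inr ⟨ha1, ha2, htc1, ?_⟩)
            have e : (⟨a.val - k, by omega⟩ : Fin (n-k)) = ⟨0, by omega⟩ := by simp only [Fin.mk.injEq]; omega
            rw [e]
          · refine Or.inr (Or.inr ⟨ha1, ha2, htc1, γ.symm ?_⟩)
            exact hγ ⟨0, by omega⟩ ⟨a.val - k, by omega⟩ ⟨b.val - k, by omega⟩ ⟨c.val - k, by omega⟩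
              (fin_mk_lt (by omega)) (fin_mk_lt (by omega)) (fin_mk_lt (by omega))
              (γ.symm hr0) hr1
        exact Or.inr (Or.inr (Or.inr ⟨hga, Or.inr (Or.inr ⟨hb1, hb2, htc1, hr0⟩)⟩))
  · -- a, c both in top class
    rcases hta with h | ⟨ha1, ha2, htb1, hra⟩ | ⟨ha1, ha2, htc1, hra⟩
    · omega
    · -- a in [j,k) part of top class
      rcases htc with h | ⟨hc1, hc2, _, hrc⟩ | ⟨hc1, hc2, htc1, hrc⟩
      · omega
      · -- c also in [j,k); so b in [j,k)
        rcases hbd with ⟨hb, _, _⟩ | ⟨hb1, hb2, hd1, hd2, hr2⟩ | ⟨hb1, hb2, _, _, _⟩ | ⟨htb, _⟩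
        · omega
        · have hgb : genTop n j k tb tc β γ b := by
            refine Or.inr (Or.inl ⟨hb1, hb2, htb1, β.symm ?_⟩)
            exact hβ ⟨0, by omega⟩ ⟨b.val - j, by omega⟩ ⟨c.val - j, by omega⟩ ⟨d.val - j, by omega⟩
              (fin_mk_lt (by omega)) (fin_mk_lt (by omega)) (fin_mk_lt (by omega))
              (β.symm hrc) hr2
          exact Or.inr (Or.inr (Or.inr ⟨Or.inr (Or.inl ⟨ha1, ha2, htb1, hra⟩), hgb⟩))
        · omega
        · exact Or.inr (Or.inr (Or.inr ⟨Or.inr (Or.inl ⟨ha1, ha2, htb1, hra⟩), htb⟩))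
      · -- c in [k,n) part of top class
        rcases hbd with ⟨hb, _, _⟩ | ⟨hb1, hb2, hd1, hd2, hr2⟩ | ⟨hb1, hb2, hd1, hd2, hr2⟩ |
            ⟨htb, _⟩
        · omega
        · omega
        · have hgb : genTop n j k tb tc β γ b := by
            by_cases hbk : b.val = k
            · refine Or.inr (Or.inr ⟨hb1, hb2, htc1, ?_⟩)
              have e : (⟨b.val - k, by omega⟩ : Fin (n-k)) = ⟨0, by omega⟩ :=
                by simp only [Fin.mk.injEq]; omega
              rw [e]
            · refine Or.inr (Or.inr ⟨hb1, hb2, htc1, γ.symm ?_⟩)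
              exact hγ ⟨0, by omega⟩ ⟨b.val - k, by omega⟩ ⟨c.val - k, by omega⟩
                ⟨d.val - k, by omega⟩
                (fin_mk_lt (by omega)) (fin_mk_lt (by omega)) (fin_mk_lt (by omega))
                (γ.symm hrc) hr2
          exact Or.inr (Or.inr (Or.inr ⟨Or.inr (Or.inl ⟨ha1, ha2, htb1, hra⟩), hgb⟩))
        · exact Or.inr (Or.inr (Or.inr ⟨Or.inr (Or.inl ⟨ha1, ha2, htb1, hra⟩), htb⟩))
    · -- a in [k,n) part of top class
      rcases htc with h | ⟨hc1, hc2, _, _⟩ | ⟨hc1, hc2, _, hrc⟩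
      · omega
      · omega
      · rcases hbd with ⟨hb, _, _⟩ | ⟨hb1, hb2, _, _, _⟩ | ⟨hb1, hb2, hd1, hd2, hr2⟩ | ⟨htb, _⟩
        · omega
        · omega
        · have hgb : genTop n j k tb tc β γ b := by
            refine Or.inr (Or.inr ⟨hb1, hb2, htc1, γ.symm ?_⟩)
            exact hγ ⟨0, by omega⟩ ⟨b.val - k, by omega⟩ ⟨c.val - k, by omega⟩ ⟨d.val - k, by omega⟩
              (fin_mk_lt (by omega)) (fin_mk_lt (by omega)) (fin_mk_lt (by omega))
              (γ.symm hrc) hr2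
          exact Or.inr (Or.inr (Or.inr ⟨Or.inr (Or.inr ⟨ha1, ha2, htc1, hra⟩), hgb⟩))
        · exact Or.inr (Or.inr (Or.inr ⟨Or.inr (Or.inr ⟨ha1, ha2, htc1, hra⟩), htb⟩))

lemma comap_rel {A B : Type*} (f : A → B) (r : Setoid B) (x y : A) :
    Setoid.comap f r x y ↔ r (f x) (f y) := Iff.rfl

lemma kerF_iff (hjk : j ≤ k) (hkn : k ≤ n) (x y : Fin (n+1)) :
    Setoid.ker (Fgen n j k tb tc α β γ) x y ↔ gluedGen n j k tb tc α β γ x y := by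
  rw [Setoid.ker_def]
  exact (gluedGen_iff hjk hkn x y).symm

theorem NC_ker (hjk : j ≤ k) (hkn : k ≤ n)
    (hα : Noncrossing α) (hβ : Noncrossing β) (hγ : Noncrossing γ) :
    Noncrossing (Setoid.ker (Fgen n j k tb tc α β γ)) := by
  intro a b c d h1 h2 h3 r1 r2
  exact (kerF_iff hjk hkn a b).mpr (NC_gluedGen hjk hkn hα hβ hγ a b c d h1 h2 h3
    ((kerF_iff hjk hkn a c).mp r1) ((kerF_iff hjk hkn b d).mp r2))

section mono
variable {tb' tc' : Bool} {α' : Setoid (Fin j)} {β' : Setoid (Fin (k-j))} {γ' : Setoid (Fin (n-k))}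

lemma genTop_mono (htb : tb = true → tb' = true) (htc : tc = true → tc' = true)
    (hβ : β ≤ β') (hγ : γ ≤ γ') {x : Fin (n+1)} :
    genTop n j k tb tc β γ x → genTop n j k tb' tc' β' γ' x := by
  rintro (h | ⟨h1, h2, h3, h4⟩ | ⟨h1, h2, h3, h4⟩)
  · exact Or.inl h
  · exact Or.inr (Or.inl ⟨h1, h2, htb h3, hβ h4⟩)
  · exact Or.inr (Or.inr ⟨h1, h2, htc h3, hγ h4⟩)

lemma glued_mono (htb : tb = true → tb' = true) (htc : tc = true → tc' = true)
    (hα : α ≤ α') (hβ : β ≤ β') (hγ : γ ≤ γ') {x y : Fin (n+1)} :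
    gluedGen n j k tb tc α β γ x y → gluedGen n j k tb' tc' α' β' γ' x y := by
  rintro (⟨h1, h2, h3⟩ | ⟨h1, h2, h3, h4, h5⟩ | ⟨h1, h2, h3, h4, h5⟩ | ⟨h1, h2⟩)
  · exact Or.inl ⟨h1, h2, hα h3⟩
  · exact Or.inr (Or.inl ⟨h1, h2, h3, h4, hβ h5⟩)
  · exact Or.inr (Or.inr (Or.inl ⟨h1, h2, h3, h4, hγ h5⟩))
  · exact Or.inr (Or.inr (Or.inr ⟨genTop_mono htb htc hβ hγ h1, genTop_mono htb htc hβ hγ h2⟩))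

lemma ker_Fgen_le (hjk : j ≤ k) (hkn : k ≤ n)
    (htb : tb = true → tb' = true) (htc : tc = true → tc' = true)
    (hα : α ≤ α') (hβ : β ≤ β') (hγ : γ ≤ γ') :
    Setoid.ker (Fgen n j k tb tc α β γ) ≤ Setoid.ker (Fgen n j k tb' tc' α' β' γ') := by
  intro x y h
  exact (kerF_iff hjk hkn x y).mpr (glued_mono htb htc hα hβ hγ ((kerF_iff hjk hkn x y).mp h))

end mono

def embA (hjn : j ≤ n) : Fin j → Fin (n+1) := fun u => ⟨u.val, by omega⟩
def embB (hkn : k ≤ n) : Fin (k-j) → Fin (n+1) := fun u => ⟨j + u.val, by have := u.isLt; omega⟩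
def embC (hkn : k ≤ n) : Fin (n-k) → Fin (n+1) := fun u => ⟨k + u.val, by have := u.isLt; omega⟩

@[simp] lemma embA_val (hjn : j ≤ n) (u : Fin j) : (embA (n := n) hjn u).val = u.val := rfl
@[simp] lemma embB_val (hkn : k ≤ n) (u : Fin (k-j)) :
    (embB (n := n) (j := j) hkn u).val = j + u.val := rfl
@[simp] lemma embC_val (hkn : k ≤ n) (u : Fin (n-k)) :
    (embC (n := n) (k := k) hkn u).val = k + u.val := rfl

lemma comap_A (hjk : j ≤ k) (hkn : k ≤ n) :
    Setoid.comap (embA (n := n) (le_trans hjk hkn)) (Setoid.ker (Fgen n j k tb tc α β γ)) = α := by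
  apply Setoid.ext
  intro u v
  have hu := u.isLt
  have hv := v.isLt
  rw [comap_rel, kerF_iff hjk hkn]
  constructor
  · rintro (⟨h1, h2, h3⟩ | ⟨h1, h2, _, _, _⟩ | ⟨h1, h2, _, _, _⟩ | ⟨h | ⟨h1, _, _⟩ | ⟨h1, _, _⟩, _⟩)
    · have e1 : (⟨(embA (n := n) (le_trans hjk hkn) u).val, h1⟩ : Fin j) = u := Fin.ext rfl
      have e2 : (⟨(embA (n := n) (le_trans hjk hkn) v).val, h2⟩ : Fin j) = v := Fin.ext rfl
      rwa [e1, e2] at h3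
    all_goals (exfalso; have eu := embA_val (n := n) (le_trans hjk hkn) u; have ev := embA_val (n := n) (le_trans hjk hkn) v; omega)
  · intro h
    refine Or.inl ⟨by have := embA_val (n := n) (le_trans hjk hkn) u; have := embA_val (n := n) (le_trans hjk hkn) v; omega, by have := embA_val (n := n) (le_trans hjk hkn) u; have := embA_val (n := n) (le_trans hjk hkn) v; omega, ?_⟩
    have e1 : (⟨(embA (n := n) (le_trans hjk hkn) u).val, by have := embA_val (n := n) (le_trans hjk hkn) u; have := embA_val (n := n) (le_trans hjk hkn) v; omega⟩ : Fin j)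
        = u := Fin.ext rfl
    have e2 : (⟨(embA (n := n) (le_trans hjk hkn) v).val, by have := embA_val (n := n) (le_trans hjk hkn) u; have := embA_val (n := n) (le_trans hjk hkn) v; omega⟩ : Fin j)
        = v := Fin.ext rfl
    rw [e1, e2]
    exact h

lemma comap_B (hjk : j ≤ k) (hkn : k ≤ n) :
    Setoid.comap (embB (n := n) (j := j) hkn) (Setoid.ker (Fgen n j k tb tc α β γ)) = β := by
  apply Setoid.ext
  intro u v
  have hu := u.isLt
  have hv := v.isLt
  rw [comap_rel, kerF_iff hjk hkn]
  have eu : ∀ (h : (embB (n := n) (j := j) hkn u).val - j < k - j),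
      (⟨(embB (n := n) (j := j) hkn u).val - j, h⟩ : Fin (k-j)) = u :=
    fun h => Fin.ext (show (embB (n := n) (j := j) hkn u).val - j = u.val by
      have := embB_val (n:=n) (j:=j) hkn u; omega)
  have ev : ∀ (h : (embB (n := n) (j := j) hkn v).val - j < k - j),
      (⟨(embB (n := n) (j := j) hkn v).val - j, h⟩ : Fin (k-j)) = v :=
    fun h => Fin.ext (show (embB (n := n) (j := j) hkn v).val - j = v.val by
      have := embB_val (n:=n) (j:=j) hkn v; omega)
  constructor
  · rintro (⟨h1, h2, h3⟩ | ⟨h1, h2, h3, h4, h5⟩ | ⟨h1, h2, _, _, _⟩ | ⟨htu, htv⟩)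
    · exfalso; have := embB_val (n:=n) (j:=j) hkn u; have := embB_val (n:=n) (j:=j) hkn v; omega
    · rwa [eu, ev] at h5
    · exfalso; have := embB_val (n:=n) (j:=j) hkn u; have := embB_val (n:=n) (j:=j) hkn v; omega
    · rcases htu with h | ⟨h1, h2, h3, h4⟩ | ⟨h1, _, _⟩
      · exfalso; have := embB_val (n:=n) (j:=j) hkn u; have := embB_val (n:=n) (j:=j) hkn v; omega
      · rcases htv with h' | ⟨h1', h2', h3', h4'⟩ | ⟨h1', _, _⟩
        · exfalso; have := embB_val (n:=n) (j:=j) hkn u; have := embB_val (n:=n) (j:=j) hkn v; omega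
        · rw [eu] at h4
          rw [ev] at h4'
          exact β.trans h4 (β.symm h4')
        · exfalso; have := embB_val (n:=n) (j:=j) hkn u; have := embB_val (n:=n) (j:=j) hkn v; omega
      · exfalso; have := embB_val (n:=n) (j:=j) hkn u; have := embB_val (n:=n) (j:=j) hkn v; omega
  · intro h
    refine Or.inr (Or.inl ⟨by have := embB_val (n:=n) (j:=j) hkn u; have := embB_val (n:=n) (j:=j) hkn v; omega, by have := embB_val (n:=n) (j:=j) hkn u; have := embB_val (n:=n) (j:=j) hkn v; omega,
      by have := embB_val (n:=n) (j:=j) hkn u; have := embB_val (n:=n) (j:=j) hkn v; omega, by have := embB_val (n:=n) (j:=j) hkn u; have := embB_val (n:=n) (j:=j) hkn v; omega, ?_⟩)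
    rw [eu, ev]
    exact h

lemma comap_C (hjk : j ≤ k) (hkn : k ≤ n) :
    Setoid.comap (embC (n := n) (k := k) hkn) (Setoid.ker (Fgen n j k tb tc α β γ)) = γ := by
  apply Setoid.ext
  intro u v
  have hu := u.isLt
  have hv := v.isLt
  rw [comap_rel, kerF_iff hjk hkn]
  have eu : ∀ (h : (embC (n := n) (k := k) hkn u).val - k < n - k),
      (⟨(embC (n := n) (k := k) hkn u).val - k, h⟩ : Fin (n-k)) = u :=
    fun h => Fin.ext (show (embC (n := n) (k := k) hkn u).val - k = u.val by
      have := embC_val (n:=n) (k:=k) hkn u; omega)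
  have ev : ∀ (h : (embC (n := n) (k := k) hkn v).val - k < n - k),
      (⟨(embC (n := n) (k := k) hkn v).val - k, h⟩ : Fin (n-k)) = v :=
    fun h => Fin.ext (show (embC (n := n) (k := k) hkn v).val - k = v.val by
      have := embC_val (n:=n) (k:=k) hkn v; omega)
  constructor
  · rintro (⟨h1, h2, h3⟩ | ⟨h1, h2, h3, h4, h5⟩ | ⟨h1, h2, h3, h4, h5⟩ | ⟨htu, htv⟩)
    · exfalso; have := embC_val (n:=n) (k:=k) hkn u; have := embC_val (n:=n) (k:=k) hkn v; omega
    · exfalso; have := embC_val (n:=n) (k:=k) hkn u; have := embC_val (n:=n) (k:=k) hkn v; omega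
    · rwa [eu, ev] at h5
    · rcases htu with h | ⟨h1, _, _⟩ | ⟨h1, h2, h3, h4⟩
      · exfalso; have := embC_val (n:=n) (k:=k) hkn u; have := embC_val (n:=n) (k:=k) hkn v; omega
      · exfalso; have := embC_val (n:=n) (k:=k) hkn u; have := embC_val (n:=n) (k:=k) hkn v; omega
      · rcases htv with h' | ⟨h1', _, _⟩ | ⟨h1', h2', h3', h4'⟩
        · exfalso; have := embC_val (n:=n) (k:=k) hkn u; have := embC_val (n:=n) (k:=k) hkn v; omega
        · exfalso; have := embC_val (n:=n) (k:=k) hkn u; have := embC_val (n:=n) (k:=k) hkn v; omega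
        · rw [eu] at h4
          rw [ev] at h4'
          exact γ.trans h4 (γ.symm h4')
  · intro h
    refine Or.inr (Or.inr (Or.inl ⟨by have := embC_val (n:=n) (k:=k) hkn u; have := embC_val (n:=n) (k:=k) hkn v; omega, by have := embC_val (n:=n) (k:=k) hkn u; have := embC_val (n:=n) (k:=k) hkn v; omega,
      by have := embC_val (n:=n) (k:=k) hkn u; have := embC_val (n:=n) (k:=k) hkn v; omega, by have := embC_val (n:=n) (k:=k) hkn u; have := embC_val (n:=n) (k:=k) hkn v; omega, ?_⟩))
    rw [eu, ev]
    exact h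

lemma srep_ker_fine (hjk : j ≤ k) (hkn : k ≤ n) (htc : tc = true) (htb : tb = false) :
    srep (Setoid.ker (Fgen n j k tb tc α β γ)) (Fin.last n) = ⟨k, by omega⟩ := by
  rw [srep_eq_iff]
  constructor
  · apply (kerF_iff hjk hkn _ _).mpr
    refine Or.inr (Or.inr (Or.inr ⟨Or.inl (Fin.val_last n), ?_⟩))
    by_cases hkn' : k < n
    · refine Or.inr (Or.inr ⟨le_refl k, hkn', htc, ?_⟩)
      have e : (⟨(⟨k, by omega⟩ : Fin (n+1)).val - k, by show k - k < n - k; omega⟩ : Fin (n-k)) = ⟨0, by omega⟩ :=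
        Fin.ext (Nat.sub_self k)
      rw [e]
    · exact Or.inl (show k = n by omega)
  · intro y hy
    rcases (kerF_iff hjk hkn _ _).mp hy with ⟨h1, _, _⟩ | ⟨h1, h2, _, _, _⟩ | ⟨h1, h2, _, _, _⟩ |
        ⟨_, hty⟩
    · exfalso; have := Fin.val_last n; omega
    · exfalso; have := Fin.val_last n; omega
    · exfalso; have := Fin.val_last n; omega
    · rcases hty with h | ⟨_, _, htb', _⟩ | ⟨h1, _, _⟩
      · exact Fin.le_def.mpr (show k ≤ y.val by omega)
      · rw [htb] at htb'; cases htb'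
      · exact Fin.le_def.mpr (show k ≤ y.val by omega)

lemma srep_ker_coarse (hjk : j ≤ k) (hkn : k ≤ n) (htb : tb = true) (htc : tc = true) :
    srep (Setoid.ker (Fgen n j k tb tc α β γ)) (Fin.last n) = ⟨j, by omega⟩ := by
  rw [srep_eq_iff]
  constructor
  · apply (kerF_iff hjk hkn _ _).mpr
    refine Or.inr (Or.inr (Or.inr ⟨Or.inl (Fin.val_last n), ?_⟩))
    by_cases hjk' : j < k
    · refine Or.inr (Or.inl ⟨le_refl j, hjk', htb, ?_⟩)
      have e : (⟨(⟨j, by omega⟩ : Fin (n+1)).val - j, by show j - j < k - j; omega⟩ : Fin (k-j)) = ⟨0, by omega⟩ :=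
        Fin.ext (Nat.sub_self j)
      rw [e]
    · by_cases hkn' : k < n
      · refine Or.inr (Or.inr ⟨show k ≤ j by omega, show j < n by omega, htc, ?_⟩)
        have e : (⟨(⟨j, by omega⟩ : Fin (n+1)).val - k, by show j - k < n - k; omega⟩ : Fin (n-k)) = ⟨0, by omega⟩ :=
          Fin.ext (Nat.sub_eq_zero_of_le (show j ≤ k by omega))
        rw [e]
      · exact Or.inl (show j = n by omega)
  · intro y hy
    rcases (kerF_iff hjk hkn _ _).mp hy with ⟨h1, _, _⟩ | ⟨h1, h2, _, _, _⟩ | ⟨h1, h2, _, _, _⟩ |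
        ⟨_, hty⟩
    · exfalso; have := Fin.val_last n; omega
    · exfalso; have := Fin.val_last n; omega
    · exfalso; have := Fin.val_last n; omega
    · rcases hty with h | ⟨h1, _, _, _⟩ | ⟨h1, _, _⟩
      · exact Fin.le_def.mpr (show j ≤ y.val by omega)
      · exact Fin.le_def.mpr (show j ≤ y.val by omega)
      · exact Fin.le_def.mpr (show j ≤ y.val by omega)

lemma glued_symm {x y : Fin (n+1)} (h : gluedGen n j k tb tc α β γ x y) :
    gluedGen n j k tb tc α β γ y x := by
  rcases h with ⟨h1, h2, h3⟩ | ⟨h1, h2, h3, h4, h5⟩ | ⟨h1, h2, h3, h4, h5⟩ | ⟨h1, h2⟩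
  · exact Or.inl ⟨h2, h1, α.symm h3⟩
  · exact Or.inr (Or.inl ⟨h3, h4, h1, h2, β.symm h5⟩)
  · exact Or.inr (Or.inr (Or.inl ⟨h3, h4, h1, h2, γ.symm h5⟩))
  · exact Or.inr (Or.inr (Or.inr ⟨h2, h1⟩))

section forwardlem
variable {π π' : Setoid (Fin (n+1))}

lemma cut_lemma {c : ℕ} {σ : Setoid (Fin (n+1))} (hNC : Noncrossing σ) (hcn : c ≤ n)
    (hσ : σ (Fin.last n) ⟨c, by omega⟩)
    (hmin : ∀ w : Fin (n+1), σ (Fin.last n) w → c ≤ w.val) :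
    ∀ u v : Fin (n+1), u.val < c → c ≤ v.val → v.val < n → ¬ σ u v := by
  intro u v hu hv1 hv2 hrel
  have hlast : σ u (Fin.last n) := by
    by_cases hvc : v.val = c
    · have ev : v = ⟨c, by omega⟩ := Fin.ext hvc
      rw [ev] at hrel
      exact σ.trans hrel (σ.symm hσ)
    · have hcross := hNC u ⟨c, by omega⟩ v (Fin.last n)
        (Fin.lt_def.mpr (show u.val < c by omega))
        (Fin.lt_def.mpr (show c < v.val by omega))
        (Fin.lt_def.mpr (show v.val < n by omega))
        hrel (σ.symm hσ)
      exact σ.trans hcross (σ.symm hσ)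
  have := hmin u (σ.symm hlast)
  omega

theorem forward_fine (hjn : j ≤ n) (hkn : k ≤ n)
    (hNCf : Noncrossing π) (hNCc : Noncrossing π') (hle : π ≤ π')
    (hj : (srep π' (Fin.last n)).val = j) (hk : (srep π (Fin.last n)).val = k)
    (x y : Fin (n+1)) :
    π x y ↔ gluedGen n j k false true (Setoid.comap (embA (n := n) hjn) π)
      (Setoid.comap (embB (n := n) (j := j) hkn) π)
      (Setoid.comap (embC (n := n) (k := k) hkn) π) x y := by
  have hπk : π (Fin.last n) ⟨k, by omega⟩ := by
    have h1 := srep_rel π (Fin.last n)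
    have e : srep π (Fin.last n) = ⟨k, by omega⟩ := Fin.ext hk
    rwa [e] at h1
  have hπ'j : π' (Fin.last n) ⟨j, by omega⟩ := by
    have h1 := srep_rel π' (Fin.last n)
    have e : srep π' (Fin.last n) = ⟨j, by omega⟩ := Fin.ext hj
    rwa [e] at h1
  have hjk : j ≤ k := by
    have h2 : π' (Fin.last n) ⟨k, by omega⟩ := hle hπk
    have h4 : (srep π' (Fin.last n)).val ≤ k := Fin.le_def.mp (srep_le π' h2)
    omega
  have hminf : ∀ w : Fin (n+1), π (Fin.last n) w → k ≤ w.val := by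
    intro w hw
    have := Fin.le_def.mp (srep_le π hw)
    omega
  have hminc : ∀ w : Fin (n+1), π' (Fin.last n) w → j ≤ w.val := by
    intro w hw
    have := Fin.le_def.mp (srep_le π' hw)
    omega
  have fact2 := cut_lemma hNCf hkn hπk hminf
  have fact1 := cut_lemma hNCc hjn hπ'j hminc
  have toLastF : ∀ t, genTop n j k false true (Setoid.comap (embB (n := n) (j := j) hkn) π)
      (Setoid.comap (embC (n := n) (k := k) hkn) π) t → π t (Fin.last n) := by
    rintro t (ht | ⟨h1, h2, h3, _⟩ | ⟨h1, h2, _, h4⟩)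
    · have e : t = Fin.last n := Fin.ext ht
      rw [e]
    · cases h3
    · have h5 := (comap_rel _ _ _ _).mp h4
      have e1 : embC (n := n) (k := k) hkn ⟨t.val - k, by omega⟩ = t :=
        Fin.ext (show k + (t.val - k) = t.val by omega)
      have e2 : embC (n := n) (k := k) hkn ⟨0, by omega⟩ = ⟨k, by omega⟩ :=
        Fin.ext (show k + 0 = k by omega)
      rw [e1, e2] at h5
      exact π.trans h5 (π.symm hπk)
  constructor
  · intro hxy0
    suffices main : ∀ u v : Fin (n+1), u.val ≤ v.val → π u v →
        gluedGen n j k false true (Setoid.comap (embA (n := n) hjn) π)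
          (Setoid.comap (embB (n := n) (j := j) hkn) π)
          (Setoid.comap (embC (n := n) (k := k) hkn) π) u v by
      rcases Nat.le_total x.val y.val with hxy | hxy
      · exact main x y hxy hxy0
      · exact glued_symm (main y x hxy (π.symm hxy0))
    intro u v huv h
    by_cases hvn : v.val = n
    · by_cases hun : u.val = n
      · exact Or.inr (Or.inr (Or.inr ⟨Or.inl hun, Or.inl hvn⟩))
      · have hun' : u.val < n := by have := u.isLt; omega
        have hulast : π u (Fin.last n) := by
          have ev : v = Fin.last n := Fin.ext hvn
          rwa [ev] at h
        have hku : k ≤ u.val := by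
          have := Fin.le_def.mp (srep_le π (π.symm hulast))
          omega
        refine Or.inr (Or.inr (Or.inr ⟨Or.inr (Or.inr ⟨hku, hun', rfl, ?_⟩), Or.inl hvn⟩))
        apply (comap_rel _ _ _ _).mpr
        have e1 : embC (n := n) (k := k) hkn ⟨u.val - k, by omega⟩ = u :=
          Fin.ext (show k + (u.val - k) = u.val by omega)
        have e2 : embC (n := n) (k := k) hkn ⟨0, by omega⟩ = ⟨k, by omega⟩ :=
          Fin.ext (show k + 0 = k by omega)
        rw [e1, e2]
        exact π.trans hulast hπk
    · have hvn' : v.val < n := by have := v.isLt; omega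
      rcases Nat.lt_or_ge v.val j with hvj | hvj
      · refine Or.inl ⟨by omega, hvj, ?_⟩
        apply (comap_rel _ _ _ _).mpr
        have e1 : embA (n := n) hjn ⟨u.val, by omega⟩ = u := Fin.ext rfl
        have e2 : embA (n := n) hjn ⟨v.val, hvj⟩ = v := Fin.ext rfl
        rw [e1, e2]
        exact h
      · rcases Nat.lt_or_ge v.val k with hvk | hvk
        · have huj : j ≤ u.val := by
            by_contra hc
            exact fact1 u v (by omega) (by omega) hvn' (hle h)
          refine Or.inr (Or.inl ⟨huj, by omega, hvj, hvk, ?_⟩)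
          apply (comap_rel _ _ _ _).mpr
          have e1 : embB (n := n) (j := j) hkn ⟨u.val - j, by omega⟩ = u :=
            Fin.ext (show j + (u.val - j) = u.val by omega)
          have e2 : embB (n := n) (j := j) hkn ⟨v.val - j, by omega⟩ = v :=
            Fin.ext (show j + (v.val - j) = v.val by omega)
          rw [e1, e2]
          exact h
        · have huk : k ≤ u.val := by
            by_contra hc
            exact fact2 u v (by omega) hvk hvn' h
          refine Or.inr (Or.inr (Or.inl ⟨huk, by omega, hvk, hvn', ?_⟩))
          apply (comap_rel _ _ _ _).mpr
          have e1 : embC (n := n) (k := k) hkn ⟨u.val - k, by omega⟩ = u :=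
            Fin.ext (show k + (u.val - k) = u.val by omega)
          have e2 : embC (n := n) (k := k) hkn ⟨v.val - k, by omega⟩ = v :=
            Fin.ext (show k + (v.val - k) = v.val by omega)
          rw [e1, e2]
          exact h
  · rintro (⟨h1, h2, h3⟩ | ⟨h1, h2, h3, h4, h5⟩ | ⟨h1, h2, h3, h4, h5⟩ | ⟨ht1, ht2⟩)
    · have h6 := (comap_rel _ _ _ _).mp h3
      have e1 : embA (n := n) hjn ⟨x.val, h1⟩ = x := Fin.ext rfl
      have e2 : embA (n := n) hjn ⟨y.val, h2⟩ = y := Fin.ext rfl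
      rwa [e1, e2] at h6
    · have h6 := (comap_rel _ _ _ _).mp h5
      have e1 : embB (n := n) (j := j) hkn ⟨x.val - j, by omega⟩ = x :=
        Fin.ext (show j + (x.val - j) = x.val by omega)
      have e2 : embB (n := n) (j := j) hkn ⟨y.val - j, by omega⟩ = y :=
        Fin.ext (show j + (y.val - j) = y.val by omega)
      rwa [e1, e2] at h6
    · have h6 := (comap_rel _ _ _ _).mp h5
      have e1 : embC (n := n) (k := k) hkn ⟨x.val - k, by omega⟩ = x :=
        Fin.ext (show k + (x.val - k) = x.val by omega)
      have e2 : embC (n := n) (k := k) hkn ⟨y.val - k, by omega⟩ = y :=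
        Fin.ext (show k + (y.val - k) = y.val by omega)
      rwa [e1, e2] at h6
    · exact π.trans (toLastF x ht1) (π.symm (toLastF y ht2))

theorem forward_coarse (hjn : j ≤ n) (hkn : k ≤ n)
    (hNCf : Noncrossing π) (hNCc : Noncrossing π') (hle : π ≤ π')
    (hj : (srep π' (Fin.last n)).val = j) (hk : (srep π (Fin.last n)).val = k)
    (x y : Fin (n+1)) :
    π' x y ↔ gluedGen n j k true true (Setoid.comap (embA (n := n) hjn) π')
      (Setoid.comap (embB (n := n) (j := j) hkn) π')
      (Setoid.comap (embC (n := n) (k := k) hkn) π') x y := by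
  have hπk : π (Fin.last n) ⟨k, by omega⟩ := by
    have h1 := srep_rel π (Fin.last n)
    have e : srep π (Fin.last n) = ⟨k, by omega⟩ := Fin.ext hk
    rwa [e] at h1
  have hπ'k : π' (Fin.last n) ⟨k, by omega⟩ := hle hπk
  have hπ'j : π' (Fin.last n) ⟨j, by omega⟩ := by
    have h1 := srep_rel π' (Fin.last n)
    have e : srep π' (Fin.last n) = ⟨j, by omega⟩ := Fin.ext hj
    rwa [e] at h1
  have hjk : j ≤ k := by
    have h4 : (srep π' (Fin.last n)).val ≤ k := Fin.le_def.mp (srep_le π' hπ'k)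
    omega
  have hminc : ∀ w : Fin (n+1), π' (Fin.last n) w → j ≤ w.val := by
    intro w hw
    have := Fin.le_def.mp (srep_le π' hw)
    omega
  have fact1 := cut_lemma hNCc hjn hπ'j hminc
  have toLastC : ∀ t, genTop n j k true true (Setoid.comap (embB (n := n) (j := j) hkn) π')
      (Setoid.comap (embC (n := n) (k := k) hkn) π') t → π' t (Fin.last n) := by
    rintro t (ht | ⟨h1, h2, _, h4⟩ | ⟨h1, h2, _, h4⟩)
    · have e : t = Fin.last n := Fin.ext ht
      rw [e]
    · have h5 := (comap_rel _ _ _ _).mp h4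
      have e1 : embB (n := n) (j := j) hkn ⟨t.val - j, by omega⟩ = t :=
        Fin.ext (show j + (t.val - j) = t.val by omega)
      have e2 : embB (n := n) (j := j) hkn ⟨0, by omega⟩ = ⟨j, by omega⟩ :=
        Fin.ext (show j + 0 = j by omega)
      rw [e1, e2] at h5
      exact π'.trans h5 (π'.symm hπ'j)
    · have h5 := (comap_rel _ _ _ _).mp h4
      have e1 : embC (n := n) (k := k) hkn ⟨t.val - k, by omega⟩ = t :=
        Fin.ext (show k + (t.val - k) = t.val by omega)
      have e2 : embC (n := n) (k := k) hkn ⟨0, by omega⟩ = ⟨k, by omega⟩ :=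
        Fin.ext (show k + 0 = k by omega)
      rw [e1, e2] at h5
      exact π'.trans h5 (π'.symm hπ'k)
  constructor
  · intro hxy0
    suffices main : ∀ u v : Fin (n+1), u.val ≤ v.val → π' u v →
        gluedGen n j k true true (Setoid.comap (embA (n := n) hjn) π')
          (Setoid.comap (embB (n := n) (j := j) hkn) π')
          (Setoid.comap (embC (n := n) (k := k) hkn) π') u v by
      rcases Nat.le_total x.val y.val with hxy | hxy
      · exact main x y hxy hxy0
      · exact glued_symm (main y x hxy (π'.symm hxy0))
    intro u v huv h
    -- helper: an element related to `last` is in the top class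
    have topOf : ∀ w : Fin (n+1), π' w (Fin.last n) →
        genTop n j k true true (Setoid.comap (embB (n := n) (j := j) hkn) π')
          (Setoid.comap (embC (n := n) (k := k) hkn) π') w := by
      intro w hw
      by_cases hwn : w.val = n
      · exact Or.inl hwn
      · have hwn' : w.val < n := by have := w.isLt; omega
        have hjw : j ≤ w.val := hminc w (π'.symm hw)
        rcases Nat.lt_or_ge w.val k with hwk | hwk
        · refine Or.inr (Or.inl ⟨hjw, hwk, rfl, ?_⟩)
          apply (comap_rel _ _ _ _).mpr
          have e1 : embB (n := n) (j := j) hkn ⟨w.val - j, by omega⟩ = w :=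
            Fin.ext (show j + (w.val - j) = w.val by omega)
          have e2 : embB (n := n) (j := j) hkn ⟨0, by omega⟩ = ⟨j, by omega⟩ :=
            Fin.ext (show j + 0 = j by omega)
          rw [e1, e2]
          exact π'.trans hw hπ'j
        · refine Or.inr (Or.inr ⟨hwk, hwn', rfl, ?_⟩)
          apply (comap_rel _ _ _ _).mpr
          have e1 : embC (n := n) (k := k) hkn ⟨w.val - k, by omega⟩ = w :=
            Fin.ext (show k + (w.val - k) = w.val by omega)
          have e2 : embC (n := n) (k := k) hkn ⟨0, by omega⟩ = ⟨k, by omega⟩ :=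
            Fin.ext (show k + 0 = k by omega)
          rw [e1, e2]
          exact π'.trans hw hπ'k
    by_cases hvn : v.val = n
    · have hvlast : v = Fin.last n := Fin.ext hvn
      refine Or.inr (Or.inr (Or.inr ⟨topOf u (hvlast ▸ h), Or.inl hvn⟩))
    · have hvn' : v.val < n := by have := v.isLt; omega
      rcases Nat.lt_or_ge v.val j with hvj | hvj
      · refine Or.inl ⟨by omega, hvj, ?_⟩
        apply (comap_rel _ _ _ _).mpr
        have e1 : embA (n := n) hjn ⟨u.val, by omega⟩ = u := Fin.ext rfl
        have e2 : embA (n := n) hjn ⟨v.val, hvj⟩ = v := Fin.ext rfl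
        rw [e1, e2]
        exact h
      · rcases Nat.lt_or_ge v.val k with hvk | hvk
        · have huj : j ≤ u.val := by
            by_contra hc
            exact fact1 u v (by omega) (by omega) hvn' h
          refine Or.inr (Or.inl ⟨huj, by omega, hvj, hvk, ?_⟩)
          apply (comap_rel _ _ _ _).mpr
          have e1 : embB (n := n) (j := j) hkn ⟨u.val - j, by omega⟩ = u :=
            Fin.ext (show j + (u.val - j) = u.val by omega)
          have e2 : embB (n := n) (j := j) hkn ⟨v.val - j, by omega⟩ = v :=
            Fin.ext (show j + (v.val - j) = v.val by omega)
          rw [e1, e2]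
          exact h
        · -- k ≤ v < n
          have huj : j ≤ u.val := by
            by_contra hc
            exact fact1 u v (by omega) (by omega) hvn' h
          rcases Nat.lt_or_ge u.val k with huk | huk
          · -- j ≤ u < k ≤ v < n : both must be in the top class
            have hulast : π' u (Fin.last n) := by
              by_cases hvk' : v.val = k
              · have ev : v = ⟨k, by omega⟩ := Fin.ext hvk'
                rw [ev] at h
                exact π'.trans h (π'.symm hπ'k)
              · have hcross := hNCc u ⟨k, by omega⟩ v (Fin.last n)
                  (Fin.lt_def.mpr (show u.val < k by omega))
                  (Fin.lt_def.mpr (show k < v.val by omega))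
                  (Fin.lt_def.mpr (show v.val < n by omega))
                  h (π'.symm hπ'k)
                exact π'.trans hcross (π'.symm hπ'k)
            exact Or.inr (Or.inr (Or.inr ⟨topOf u hulast,
              topOf v (π'.trans (π'.symm h) hulast)⟩))
          · refine Or.inr (Or.inr (Or.inl ⟨huk, by omega, hvk, hvn', ?_⟩))
            apply (comap_rel _ _ _ _).mpr
            have e1 : embC (n := n) (k := k) hkn ⟨u.val - k, by omega⟩ = u :=
              Fin.ext (show k + (u.val - k) = u.val by omega)
            have e2 : embC (n := n) (k := k) hkn ⟨v.val - k, by omega⟩ = v :=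
              Fin.ext (show k + (v.val - k) = v.val by omega)
            rw [e1, e2]
            exact h
  · rintro (⟨h1, h2, h3⟩ | ⟨h1, h2, h3, h4, h5⟩ | ⟨h1, h2, h3, h4, h5⟩ | ⟨ht1, ht2⟩)
    · have h6 := (comap_rel _ _ _ _).mp h3
      have e1 : embA (n := n) hjn ⟨x.val, h1⟩ = x := Fin.ext rfl
      have e2 : embA (n := n) hjn ⟨y.val, h2⟩ = y := Fin.ext rfl
      rwa [e1, e2] at h6
    · have h6 := (comap_rel _ _ _ _).mp h5
      have e1 : embB (n := n) (j := j) hkn ⟨x.val - j, by omega⟩ = x :=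
        Fin.ext (show j + (x.val - j) = x.val by omega)
      have e2 : embB (n := n) (j := j) hkn ⟨y.val - j, by omega⟩ = y :=
        Fin.ext (show j + (y.val - j) = y.val by omega)
      rwa [e1, e2] at h6
    · have h6 := (comap_rel _ _ _ _).mp h5
      have e1 : embC (n := n) (k := k) hkn ⟨x.val - k, by omega⟩ = x :=
        Fin.ext (show k + (x.val - k) = x.val by omega)
      have e2 : embC (n := n) (k := k) hkn ⟨y.val - k, by omega⟩ = y :=
        Fin.ext (show k + (y.val - k) = y.val by omega)
      rwa [e1, e2] at h6
    · exact π'.trans (toLastC x ht1) (π'.symm (toLastC y ht2))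

end forwardlem

end glue

section assembly

def KPairs (m : ℕ) : Set (Setoid (Fin m) × Setoid (Fin m)) :=
  {q | Noncrossing q.1 ∧ Noncrossing q.2 ∧ q.1 ≤ q.2}

noncomputable instance setoidFinite (m : ℕ) : Finite (Setoid (Fin m)) := by
  apply Finite.of_injective (fun s : Setoid (Fin m) => (s : Fin m → Fin m → Prop))
  intro s t h
  exact Setoid.ext fun a b => by rw [show s.r = t.r from h]

lemma NC_comap {m m' : ℕ} (e : Fin m' → Fin m) (he : ∀ u v : Fin m', u < v → e u < e v)
    {σ : Setoid (Fin m)} (h : Noncrossing σ) : Noncrossing (Setoid.comap e σ) := by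
  intro a b c d h1 h2 h3 r1 r2
  exact (comap_rel _ _ _ _).mpr (h (e a) (e b) (e c) (e d) (he _ _ h1) (he _ _ h2) (he _ _ h3)
    ((comap_rel _ _ _ _).mp r1) ((comap_rel _ _ _ _).mp r2))

lemma comap_mono {A B : Type*} (e : A → B) {σ τ : Setoid B} (h : σ ≤ τ) :
    Setoid.comap e σ ≤ Setoid.comap e τ := by
  intro x y hxy
  exact (comap_rel _ _ _ _).mpr (h ((comap_rel _ _ _ _).mp hxy))

variable (n j k : ℕ)

def TSet : Set (Setoid (Fin (n+1)) × Setoid (Fin (n+1))) :=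
  {q | q ∈ KPairs (n+1) ∧ (srep q.2 (Fin.last n)).val = j ∧ (srep q.1 (Fin.last n)).val = k}

def PhiMap (hjn : j ≤ n) (hkn : k ≤ n) (q : Setoid (Fin (n+1)) × Setoid (Fin (n+1))) :
    (Setoid (Fin j) × Setoid (Fin j)) ×
      (Setoid (Fin (k-j)) × Setoid (Fin (k-j))) × (Setoid (Fin (n-k)) × Setoid (Fin (n-k))) :=
  ((Setoid.comap (embA (n := n) hjn) q.1, Setoid.comap (embA (n := n) hjn) q.2),
   (Setoid.comap (embB (n := n) (j := j) hkn) q.1, Setoid.comap (embB (n := n) (j := j) hkn) q.2),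
   (Setoid.comap (embC (n := n) (k := k) hkn) q.1, Setoid.comap (embC (n := n) (k := k) hkn) q.2))

noncomputable def PsiMap (t : (Setoid (Fin j) × Setoid (Fin j)) ×
      (Setoid (Fin (k-j)) × Setoid (Fin (k-j))) × (Setoid (Fin (n-k)) × Setoid (Fin (n-k)))) :
    Setoid (Fin (n+1)) × Setoid (Fin (n+1)) :=
  (Setoid.ker (Fgen n j k false true t.1.1 t.2.1.1 t.2.2.1),
   Setoid.ker (Fgen n j k true true t.1.2 t.2.1.2 t.2.2.2))

lemma phi_bijOn (hjk : j ≤ k) (hkn : k ≤ n) :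
    Set.BijOn (PhiMap n j k (le_trans hjk hkn) hkn) (TSet n j k)
      ((KPairs j) ×ˢ ((KPairs (k-j)) ×ˢ (KPairs (n-k)))) := by
  have hjn : j ≤ n := le_trans hjk hkn
  have hAmono : ∀ u v : Fin j, u < v → embA (n := n) hjn u < embA (n := n) hjn v := by
    intro u v huv
    have := Fin.lt_def.mp huv
    exact Fin.lt_def.mpr (by have := embA_val (n := n) hjn u; have := embA_val (n := n) hjn v; omega)
  have hBmono : ∀ u v : Fin (k-j), u < v →
      embB (n := n) (j := j) hkn u < embB (n := n) (j := j) hkn v := by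
    intro u v huv
    have := Fin.lt_def.mp huv
    refine Fin.lt_def.mpr ?_
    have h1 := embB_val (n := n) (j := j) hkn u
    have h2 := embB_val (n := n) (j := j) hkn v
    omega
  have hCmono : ∀ u v : Fin (n-k), u < v →
      embC (n := n) (k := k) hkn u < embC (n := n) (k := k) hkn v := by
    intro u v huv
    have := Fin.lt_def.mp huv
    refine Fin.lt_def.mpr ?_
    have h1 := embC_val (n := n) (k := k) hkn u
    have h2 := embC_val (n := n) (k := k) hkn v
    omega
  have hMapsTo : Set.MapsTo (PhiMap n j k hjn hkn) (TSet n j k)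
      ((KPairs j) ×ˢ ((KPairs (k-j)) ×ˢ (KPairs (n-k)))) := by
    rintro ⟨π, π'⟩ ⟨⟨hnc, hnc', hle⟩, hj, hk⟩
    refine ⟨⟨NC_comap _ hAmono hnc, NC_comap _ hAmono hnc', comap_mono _ hle⟩,
      ⟨NC_comap _ hBmono hnc, NC_comap _ hBmono hnc', comap_mono _ hle⟩,
      ⟨NC_comap _ hCmono hnc, NC_comap _ hCmono hnc', comap_mono _ hle⟩⟩
  have hMapsTo' : Set.MapsTo (PsiMap n j k)
      ((KPairs j) ×ˢ ((KPairs (k-j)) ×ˢ (KPairs (n-k)))) (TSet n j k) := by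
    rintro ⟨⟨a, a'⟩, ⟨b, b'⟩, ⟨c, c'⟩⟩ ⟨⟨hna, hna', hlea⟩, ⟨hnb, hnb', hleb⟩, ⟨hnc, hnc', hlec⟩⟩
    simp only [PsiMap]
    refine ⟨⟨NC_ker hjk hkn hna hnb hnc, NC_ker hjk hkn hna' hnb' hnc', ?_⟩, ?_, ?_⟩
    · exact ker_Fgen_le hjk hkn (fun h => by cases h) (fun _ => rfl) hlea hleb hlec
    · rw [srep_ker_coarse hjk hkn rfl rfl]
    · rw [srep_ker_fine hjk hkn rfl rfl]
  refine Set.InvOn.bijOn ⟨?_, ?_⟩ hMapsTo hMapsTo'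
  · -- left inverse on TSet
    rintro ⟨π, π'⟩ ⟨⟨hnc, hnc', hle⟩, hj, hk⟩
    have e1 : Setoid.ker (Fgen n j k false true (Setoid.comap (embA (n := n) hjn) π)
        (Setoid.comap (embB (n := n) (j := j) hkn) π)
        (Setoid.comap (embC (n := n) (k := k) hkn) π)) = π := by
      apply Setoid.ext
      intro x y
      exact (kerF_iff hjk hkn x y).trans (forward_fine hjn hkn hnc hnc' hle hj hk x y).symm
    have e2 : Setoid.ker (Fgen n j k true true (Setoid.comap (embA (n := n) hjn) π')
        (Setoid.comap (embB (n := n) (j := j) hkn) π')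
        (Setoid.comap (embC (n := n) (k := k) hkn) π')) = π' := by
      apply Setoid.ext
      intro x y
      exact (kerF_iff hjk hkn x y).trans (forward_coarse hjn hkn hnc hnc' hle hj hk x y).symm
    simp only [PhiMap, PsiMap]
    rw [e1, e2]
  · -- right inverse on product
    rintro ⟨⟨a, a'⟩, ⟨b, b'⟩, ⟨c, c'⟩⟩ _
    simp only [PhiMap, PsiMap, Prod.mk.injEq]
    exact ⟨⟨comap_A hjk hkn, comap_A hjk hkn⟩, ⟨comap_B hjk hkn, comap_B hjk hkn⟩,
      ⟨comap_C hjk hkn, comap_C hjk hkn⟩⟩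

lemma card_TSet (hjk : j ≤ k) (hkn : k ≤ n) :
    (TSet n j k).ncard = (KPairs j).ncard * ((KPairs (k-j)).ncard * (KPairs (n-k)).ncard) := by
  have hbij := phi_bijOn n j k hjk hkn
  have e := Nat.card_congr hbij.equiv
  rw [Nat.card_coe_set_eq, Nat.card_coe_set_eq] at e
  rw [e]
  rw [← Nat.card_coe_set_eq, Nat.card_congr (Equiv.Set.prod _ _), Nat.card_prod,
    Nat.card_congr (Equiv.Set.prod _ _), Nat.card_prod,
    Nat.card_coe_set_eq, Nat.card_coe_set_eq, Nat.card_coe_set_eq]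

end assembly


section counting
open Finset

noncomputable local instance (m : ℕ) : Fintype (Setoid (Fin m) × Setoid (Fin m)) :=
  Fintype.ofFinite _

lemma decomp (n : ℕ) :
    (KPairs (n+1)).ncard =
      ∑ p ∈ (range (n+1) ×ˢ range (n+1)).filter (fun p => p.1 ≤ p.2),
        (TSet n p.1 p.2).ncard := by
  classical
  have hfin : (KPairs (n+1)).Finite := Set.toFinite _
  rw [Set.ncard_eq_toFinset_card _ hfin]
  rw [Finset.card_eq_sum_card_fiberwise
    (f := fun q => ((srep q.2 (Fin.last n)).val, (srep q.1 (Fin.last n)).val))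
    (t := (range (n+1) ×ˢ range (n+1)).filter (fun p => p.1 ≤ p.2)) ?_]
  · apply Finset.sum_congr rfl
    intro p _
    have hset : TSet n p.1 p.2 = ↑(hfin.toFinset.filter
        (fun q => ((srep q.2 (Fin.last n)).val, (srep q.1 (Fin.last n)).val) = p)) := by
      ext q
      simp only [TSet, Set.mem_setOf_eq, Finset.coe_filter, Set.Finite.mem_toFinset,
        Prod.ext_iff]
      try tauto
    rw [hset, Set.ncard_coe_finset]
  · intro q hq
    rw [Finset.mem_coe, Set.Finite.mem_toFinset] at hq
    obtain ⟨hnc, hnc', hle⟩ := hq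
    simp only [Finset.mem_coe, Finset.mem_filter, Finset.mem_product, Finset.mem_range]
    have h1 := (srep q.2 (Fin.last n)).isLt
    have h2 := (srep q.1 (Fin.last n)).isLt
    refine ⟨⟨by omega, by omega⟩, ?_⟩
    have h3 := srep_rel q.1 (Fin.last n)
    have h4 := srep_le q.2 (hle h3)
    exact Fin.le_def.mp h4

lemma g_rec (n : ℕ) :
    (KPairs (n+1)).ncard =
      ∑ j ∈ range (n+1), ∑ i ∈ range (n+1-j),
        (KPairs j).ncard * ((KPairs i).ncard * (KPairs (n-j-i)).ncard) := by
  rw [decomp n]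
  rw [Finset.sum_filter, Finset.sum_product]
  apply Finset.sum_congr rfl
  intro j hj
  rw [Finset.mem_range] at hj
  have hstep : ∀ kk ∈ range (n+1), (if j ≤ kk then (TSet n j kk).ncard else 0) =
      (if j ≤ kk then (KPairs j).ncard * ((KPairs (kk-j)).ncard * (KPairs (n-kk)).ncard) else 0) := by
    intro kk hkk
    rw [Finset.mem_range] at hkk
    by_cases h : j ≤ kk
    · rw [if_pos h, if_pos h, card_TSet n j kk h (by omega)]
    · rw [if_neg h, if_neg h]
  rw [Finset.sum_congr rfl hstep, ← Finset.sum_filter]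
  have hIco : (range (n+1)).filter (fun kk => j ≤ kk) = Finset.Ico j (n+1) := by
    ext kk
    simp only [Finset.mem_filter, Finset.mem_range, Finset.mem_Ico]
    omega
  rw [hIco, Finset.sum_Ico_eq_sum_range]
  apply Finset.sum_congr rfl
  intro i _
  have e1 : j + i - j = i := by omega
  have e2 : n - (j + i) = n - j - i := by omega
  rw [e1, e2]

lemma g_zero : (KPairs 0).ncard = 1 := by
  have huniv : KPairs 0 = Set.univ := by
    ext q
    refine ⟨fun _ => trivial, fun _ => ⟨fun a => a.elim0, fun a => a.elim0, fun x y h => ?_⟩⟩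
    exact x.elim0
  rw [huniv, Set.ncard_univ]
  haveI : Subsingleton (Setoid (Fin 0)) := ⟨fun a b => Setoid.ext fun x => x.elim0⟩
  rw [Nat.card_eq_one_iff_unique]
  exact ⟨inferInstance, ⟨(Setoid.ker id, Setoid.ker id)⟩⟩

end counting


lemma g_eq : ∀ m, (KPairs m).ncard = KB m 1 := by
  intro m
  induction m using Nat.strong_induction_on with
  | _ m IH =>
    match m with
    | 0 =>
      rw [g_zero, KB_zero]
    | (n+1) =>
      rw [g_rec n]
      have h1 : KB (n+1) 1 = KB n 3 := by
        rw [KB_succ_succ n 0, KB_succ_zero]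
        norm_num
      have h2 : KB n 3 = ∑ j ∈ Finset.range (n+1), KB j 1 * KB (n-j) 2 := by
        rw [← KB_conv n 1 2]
      have h3 : ∀ j, j ≤ n → KB (n-j) 2 =
          ∑ i ∈ Finset.range (n+1-j), KB i 1 * KB (n-j-i) 1 := by
        intro j hj
        have := KB_conv (n-j) 1 1
        rw [show (1:ℕ)+1 = 2 from rfl] at this
        rw [← this]
        apply Finset.sum_congr (by congr 1; omega) (fun _ _ => rfl)
      rw [h1, h2]
      apply Finset.sum_congr rfl
      intro j hj
      rw [Finset.mem_range] at hj
      rw [IH j (by omega), h3 j (by omega), Finset.mul_sum]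
      apply Finset.sum_congr rfl
      intro i hi
      rw [Finset.mem_range] at hi
      rw [IH i (by omega), IH (n-j-i) (by omega)]

/-- The number of intervals in the Kreweras lattice of non-crossing partitions of [n]
(ordered by refinement) is (1/(2n+1))·C(3n,n). -/
theorem count_kreweras_intervals (n : ℕ) (hn : 1 ≤ n) :
    (2 * n + 1) *
        Set.ncard {q : Setoid (Fin n) × Setoid (Fin n) |
          Noncrossing q.1 ∧ Noncrossing q.2 ∧ q.1 ≤ q.2} =
      Nat.choose (3 * n) n := by
  have h : {q : Setoid (Fin n) × Setoid (Fin n) |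
      Noncrossing q.1 ∧ Noncrossing q.2 ∧ q.1 ≤ q.2} = KPairs n := rfl
  rw [h, g_eq n]
  exact KB_final n
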